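/- For every positive integer n and all real numbers α and β, the n×n Hankel determinant det(αβ·c_{i+j} + (α+β)·c_{i+j+1} + c_{i+j+2})_{i,j=0}^{n−1} equals (Σ_{j=0}^{n} (∏_{ℓ=2j}^{2n−1} T_ℓ)·g_{2j}(α)·g_{2j}(β)) · det(c_{i+j})_{i,j=0}^{n−1}. -/

import Mathlib

/-- `dyckGF T n k` is the weighted Dyck path generating function `c(n,k)`:
`c(0,k) = [k = 0]`, `c(n,k) = 0` for `k < 0`, and
`c(n,k) = c(n-1,k-1) + T_k c(n-1,k+1)` for `n ≥ 1`, `k ≥ 0`. -/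
def dyckGF (T : ℕ → ℝ) : ℕ → ℤ → ℝ
  | 0, k => if k = 0 then 1 else 0
  | n+1, k =>
      if k < 0 then 0
      else dyckGF T n (k-1) + T k.toNat * dyckGF T n (k+1)

/-- The polynomials `g_n(α)`: `g_0 = 1`, `g_1 = 1`,
`g_{2n}(α) = α g_{2n-1}(α) + T_{2n-2} g_{2n-2}(α)` and
`g_{2n+1}(α) = g_{2n}(α) + T_{2n-1} g_{2n-1}(α)` for `n ≥ 1`. -/
def gpoly (T : ℕ → ℝ) (α : ℝ) : ℕ → ℝ
  | 0 => 1
  | 1 => 1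
  | n+2 => (if (n+2) % 2 = 0 then α else 1) * gpoly T α (n+1) + T n * gpoly T α n

namespace HK
open Finset Matrix

variable (T : ℕ → ℝ) (α : ℝ)

/-- `cN T n k = dyckGF T n k` with natural index. -/
noncomputable def cN (n k : ℕ) : ℝ := dyckGF T n (k : ℤ)

lemma cN_zero_zero : cN T 0 0 = 1 := by simp [cN, dyckGF]

lemma cN_zero_succ (k : ℕ) : cN T 0 (k+1) = 0 := by
  show dyckGF T 0 ((k+1:ℕ):ℤ) = 0
  simp only [dyckGF]
  rw [if_neg (by push_cast; omega)]

lemma dyckGF_neg (n : ℕ) {k : ℤ} (h : k < 0) : dyckGF T n k = 0 := by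
  cases n with
  | zero => simp only [dyckGF]; rw [if_neg (by omega)]
  | succ n => simp only [dyckGF]; rw [if_pos h]

lemma cN_succ_zero (n : ℕ) : cN T (n+1) 0 = T 0 * cN T n 1 := by
  show dyckGF T (n+1) ((0:ℕ):ℤ) = _
  simp only [dyckGF]
  rw [if_neg (by omega)]
  rw [dyckGF_neg T n (by norm_num : ((0:ℕ):ℤ) - 1 < 0)]
  have : ((0:ℕ):ℤ) + 1 = ((1:ℕ):ℤ) := by norm_num
  rw [this]
  have : ((0:ℕ):ℤ).toNat = 0 := rfl
  rw [this]
  show 0 + T 0 * cN T n 1 = _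
  ring

lemma cN_succ_succ (n k : ℕ) : cN T (n+1) (k+1) = cN T n k + T (k+1) * cN T n (k+2) := by
  show dyckGF T (n+1) ((k+1:ℕ):ℤ) = _
  simp only [dyckGF]
  rw [if_neg (by push_cast; omega)]
  have h1 : ((k+1:ℕ):ℤ) - 1 = ((k:ℕ):ℤ) := by push_cast; ring
  have h2 : ((k+1:ℕ):ℤ) + 1 = ((k+2:ℕ):ℤ) := by push_cast; ring
  have h3 : ((k+1:ℕ):ℤ).toNat = k+1 := by omega
  rw [h1, h2, h3]
  rfl

lemma cN_eq_zero_of_lt : ∀ n k : ℕ, n < k → cN T n k = 0 := by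
  intro n
  induction n with
  | zero =>
    intro k hk
    obtain ⟨k, rfl⟩ : ∃ k', k = k'+1 := ⟨k-1, by omega⟩
    exact cN_zero_succ T k
  | succ n ih =>
    intro k hk
    obtain ⟨k, rfl⟩ : ∃ k', k = k'+1 := ⟨k-1, by omega⟩
    rw [cN_succ_succ, ih k (by omega), ih (k+2) (by omega)]
    ring

lemma cN_diag : ∀ n : ℕ, cN T n n = 1 := by
  intro n
  induction n with
  | zero => exact cN_zero_zero T
  | succ n ih =>
    rw [cN_succ_succ, ih, cN_eq_zero_of_lt T n (n+2) (by omega)]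
    ring

lemma cN_parity : ∀ n k : ℕ, (n + k) % 2 = 1 → cN T n k = 0 := by
  intro n
  induction n with
  | zero =>
    intro k hk
    obtain ⟨k, rfl⟩ : ∃ k', k = k'+1 := ⟨k-1, by omega⟩
    exact cN_zero_succ T k
  | succ n ih =>
    intro k hk
    cases k with
    | zero =>
      rw [cN_succ_zero, ih 1 (by omega)]
      ring
    | succ k =>
      rw [cN_succ_succ, ih k (by omega), ih (k+2) (by omega)]
      ring

/-- `w T k` = product of `T` over levels below `k`. -/
noncomputable def w (k : ℕ) : ℝ := ∏ ℓ ∈ range k, T ℓ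

lemma w_zero : w T 0 = 1 := by simp [w]

lemma w_succ (k : ℕ) : w T (k+1) = w T k * T k := by
  simp [w, prod_range_succ]

lemma transfer (m p M : ℕ) (hm : m ≤ M) :
    ∑ k ∈ range (M+2), cN T (m+1) k * (w T k * cN T p k)
      = ∑ k ∈ range (M+2), cN T m k * (w T k * cN T (p+1) k) := by
  set s1 : ℕ → ℝ := fun k => cN T m k * (w T (k+1) * cN T p (k+1)) with hs1
  set s2 : ℕ → ℝ := fun k => cN T m (k+1) * (w T (k+1) * cN T p k) with hs2
  have hL : ∑ k ∈ range (M+2), cN T (m+1) k * (w T k * cN T p k)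
      = (∑ k ∈ range (M+2), s1 k) + (∑ k ∈ range (M+2), s2 k) := by
    rw [Finset.sum_range_succ' (fun k => cN T (m+1) k * (w T k * cN T p k)) (M+1)]
    have e1 : ∀ k, cN T (m+1) (k+1) * (w T (k+1) * cN T p (k+1)) = s1 k + s2 (k+1) := by
      intro k
      rw [hs1, hs2]
      simp only
      rw [cN_succ_succ, w_succ T (k+1)]
      ring
    rw [Finset.sum_congr rfl (fun k _ => e1 k)]
    rw [Finset.sum_add_distrib]
    have e2 : cN T (m+1) 0 * (w T 0 * cN T p 0) = s2 0 := by
      rw [hs2]; simp only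
      rw [cN_succ_zero, w_succ, w_zero]
      ring
    rw [e2]
    have e3 : ∑ k ∈ range (M+1), s1 k = ∑ k ∈ range (M+2), s1 k := by
      rw [Finset.sum_range_succ s1 (M+1)]
      have : s1 (M+1) = 0 := by
        rw [hs1]; simp only
        rw [cN_eq_zero_of_lt T m (M+1) (by omega)]
        ring
      rw [this, add_zero]
    have e4 : (∑ k ∈ range (M+1), s2 (k+1)) + s2 0 = ∑ k ∈ range (M+2), s2 k := by
      rw [Finset.sum_range_succ' s2 (M+1)]
    rw [e3, ← e4]
    ring
  have hR : ∑ k ∈ range (M+2), cN T m k * (w T k * cN T (p+1) k)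
      = (∑ k ∈ range (M+2), s1 k) + (∑ k ∈ range (M+2), s2 k) := by
    rw [Finset.sum_range_succ' (fun k => cN T m k * (w T k * cN T (p+1) k)) (M+1)]
    have e1 : ∀ k, cN T m (k+1) * (w T (k+1) * cN T (p+1) (k+1)) = s2 k + s1 (k+1) := by
      intro k
      rw [hs1, hs2]
      simp only
      rw [cN_succ_succ T p k, w_succ T (k+1)]
      ring
    rw [Finset.sum_congr rfl (fun k _ => e1 k)]
    rw [Finset.sum_add_distrib]
    have e2 : cN T m 0 * (w T 0 * cN T (p+1) 0) = s1 0 := by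
      rw [hs1]; simp only
      rw [cN_succ_zero, w_succ, w_zero]
      ring
    rw [e2]
    have e3 : ∑ k ∈ range (M+1), s2 k = ∑ k ∈ range (M+2), s2 k := by
      rw [Finset.sum_range_succ s2 (M+1)]
      have : s2 (M+1) = 0 := by
        rw [hs2]; simp only
        rw [cN_eq_zero_of_lt T m (M+2) (by omega)]
        ring
      rw [this, add_zero]
    have e4 : (∑ k ∈ range (M+1), s1 (k+1)) + s1 0 = ∑ k ∈ range (M+2), s1 k := by
      rw [Finset.sum_range_succ' s1 (M+1)]
    rw [e3, ← e4]
    ring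
  rw [hL, hR]

lemma split : ∀ m p N : ℕ, m < N →
    cN T (m+p) 0 = ∑ k ∈ range N, cN T m k * (w T k * cN T p k) := by
  intro m
  induction m with
  | zero =>
    intro p N hN
    rw [Finset.sum_eq_single 0]
    · rw [zero_add, cN_zero_zero, w_zero]; ring
    · intro k _ hk
      obtain ⟨k, rfl⟩ : ∃ k', k = k'+1 := ⟨k-1, by omega⟩
      rw [cN_zero_succ]; ring
    · intro h; exact absurd (Finset.mem_range.mpr hN) h
  | succ m ih =>
    intro p N hN
    obtain ⟨M, rfl⟩ : ∃ M, N = M + 2 := ⟨N - 2, by omega⟩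
    have h1 : m + 1 + p = m + (p+1) := by omega
    rw [h1, ih (p+1) (M+2) (by omega), ← transfer T m p M (by omega)]

lemma sum_even_kill (f : ℕ → ℝ) (hf : ∀ k, f (2*k+1) = 0) :
    ∀ N : ℕ, ∑ k ∈ range (2*N+1), f k = ∑ k ∈ range (N+1), f (2*k) := by
  intro N
  induction N with
  | zero => simp
  | succ N ih =>
    have h1 : 2*(N+1)+1 = (2*N+1) + 1 + 1 := by omega
    rw [h1, Finset.sum_range_succ, Finset.sum_range_succ, ih, hf N]
    rw [Finset.sum_range_succ (fun k => f (2*k)) (N+1)]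
    have : 2*N+1+1 = 2*(N+1) := by omega
    rw [this]
    ring

lemma split_even (i j N : ℕ) (hi : i < N) :
    cN T (2*i+2*j) 0 = ∑ k ∈ range N, cN T (2*i) (2*k) * (w T (2*k) * cN T (2*j) (2*k)) := by
  obtain ⟨N, rfl⟩ : ∃ N', N = N'+1 := ⟨N-1, by omega⟩
  rw [split T (2*i) (2*j) (2*N+1) (by omega)]
  exact sum_even_kill (fun k => cN T (2*i) k * (w T k * cN T (2*j) k))
    (fun k => by
      show cN T (2*i) (2*k+1) * (w T (2*k+1) * cN T (2*j) (2*k+1)) = 0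
      rw [cN_parity T (2*i) (2*k+1) (by omega)]; ring) N

lemma gpoly_even (k : ℕ) :
    gpoly T α (2*k+2) = α * gpoly T α (2*k+1) + T (2*k) * gpoly T α (2*k) := by
  show gpoly T α ((2*k)+2) = _
  rw [gpoly]
  rw [if_pos (by omega)]

lemma gpoly_odd (k : ℕ) :
    gpoly T α (2*k+3) = gpoly T α (2*k+2) + T (2*k+1) * gpoly T α (2*k+1) := by
  show gpoly T α ((2*k+1)+2) = _
  rw [gpoly]
  rw [if_neg (by omega)]
  have : 2*k+1+1 = 2*k+2 := by omega
  rw [this, one_mul]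

/-- the kernel identity, with its odd companion. -/
lemma Uker : ∀ m : ℕ,
    (∑ k ∈ range (m+1), (-1:ℝ)^k * gpoly T α (2*k) * cN T (2*m) (2*k) = (-α)^m)
    ∧ (∑ k ∈ range (m+1), (-1:ℝ)^k * gpoly T α (2*k+1) * cN T (2*m+1) (2*k+1) = (-α)^m) := by
  intro m
  induction m with
  | zero =>
    constructor
    · simp [cN_zero_zero, gpoly]
    · have h1 : cN T 1 1 = 1 := cN_diag T 1
      simp [h1, gpoly]
  | succ m ih =>
    -- first: V m = U m was already in ih; prove U (m+1) = -α * V m, then V (m+1) = U (m+1).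
    have hU : ∑ k ∈ range (m+2), (-1:ℝ)^k * gpoly T α (2*k) * cN T (2*(m+1)) (2*k)
        = (-α)^(m+1) := by
      have expand : ∀ k, (-1:ℝ)^(k+1) * gpoly T α (2*(k+1)) * cN T (2*(m+1)) (2*(k+1))
          = (-1:ℝ)^(k+1) * gpoly T α (2*k+2) * cN T (2*m+1) (2*k+1)
            + (-1:ℝ)^(k+1) * (T (2*(k+1)) * gpoly T α (2*(k+1)))
                * cN T (2*m+1) (2*(k+1)+1) := by
        intro k
        have hC : cN T (2*(m+1)) (2*(k+1))
            = cN T (2*m+1) (2*k+1) + T (2*(k+1)) * cN T (2*m+1) (2*(k+1)+1) := by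
          have h1 : 2*(m+1) = (2*m+1)+1 := by omega
          have h2 : 2*(k+1) = (2*k+1)+1 := by omega
          have h4 : (2*k+1)+2 = (2*(k+1))+1 := by omega
          rw [h1, h2, cN_succ_succ T (2*m+1) (2*k+1), h4, ← h2]
        rw [hC]
        have h3 : 2*k+2 = 2*(k+1) := by omega
        rw [h3]
        ring
      set r : ℕ → ℝ := fun j => (-1:ℝ)^j * (T (2*j) * gpoly T α (2*j)) * cN T (2*m+1) (2*j+1)
        with hr
      rw [Finset.sum_range_succ' (fun k => (-1:ℝ)^k * gpoly T α (2*k) * cN T (2*(m+1)) (2*k))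
        (m+1)]
      have e0 : (-1:ℝ)^0 * gpoly T α (2*0) * cN T (2*(m+1)) (2*0) = r 0 := by
        rw [hr]; simp only
        have h1 : 2*(m+1) = (2*m+1)+1 := by omega
        rw [h1]
        have : (2:ℕ)*0 = 0 := rfl
        rw [this, cN_succ_zero T (2*m+1)]
        simp [gpoly]
      have e1 : ∀ k, (-1:ℝ)^(k+1) * gpoly T α (2*(k+1)) * cN T (2*(m+1)) (2*(k+1))
          = (-1:ℝ)^(k+1) * gpoly T α (2*k+2) * cN T (2*m+1) (2*k+1) + r (k+1) := by
        intro k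
        rw [expand k, hr]
      rw [Finset.sum_congr rfl (fun k _ => e1 k), Finset.sum_add_distrib, e0]
      have e2 : (∑ k ∈ range (m+1), r (k+1)) + r 0 = ∑ k ∈ range (m+2), r k :=
        (Finset.sum_range_succ' r (m+1)).symm
      have e3 : ∑ k ∈ range (m+2), r k = ∑ k ∈ range (m+1), r k := by
        rw [Finset.sum_range_succ]
        have : r (m+1) = 0 := by
          rw [hr]; simp only
          rw [cN_eq_zero_of_lt T (2*m+1) (2*(m+1)+1) (by omega)]
          ring
        rw [this, add_zero]
      rw [add_assoc, e2, e3, ← Finset.sum_add_distrib]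
      have e4 : ∀ k ∈ range (m+1),
          (-1:ℝ)^(k+1) * gpoly T α (2*k+2) * cN T (2*m+1) (2*k+1) + r k
            = (-α) * ((-1:ℝ)^k * gpoly T α (2*k+1) * cN T (2*m+1) (2*k+1)) := by
        intro k _
        rw [hr]; simp only
        rw [gpoly_even T α k]
        ring
      rw [Finset.sum_congr rfl e4, ← Finset.mul_sum, ih.2]
      ring
    constructor
    · exact hU
    · -- V (m+1) = U (m+1)
      have expand : ∀ k, (-1:ℝ)^k * gpoly T α (2*k+1) * cN T (2*(m+1)+1) (2*k+1)
          = (-1:ℝ)^k * gpoly T α (2*k+1) * cN T (2*(m+1)) (2*k)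
            + (-1:ℝ)^k * (gpoly T α (2*k+1) * T (2*k+1)) * cN T (2*(m+1)) (2*k+2) := by
        intro k
        have h1 : 2*(m+1)+1 = (2*(m+1))+1 := rfl
        have h2 : 2*k+1 = (2*k)+1 := rfl
        rw [h1, h2, cN_succ_succ T (2*(m+1)) (2*k)]
        ring
      set q : ℕ → ℝ := fun j => (-1:ℝ)^j * (gpoly T α (2*j+1) - gpoly T α (2*j))
          * cN T (2*(m+1)) (2*j) with hq
      have sq : ∀ k, (-1:ℝ)^k * (gpoly T α (2*k+1) * T (2*k+1)) * cN T (2*(m+1)) (2*k+2)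
          = -(q (k+1)) := by
        intro k
        rw [hq]; simp only
        have h1 : gpoly T α (2*(k+1)+1) - gpoly T α (2*(k+1)) = T (2*k+1) * gpoly T α (2*k+1) := by
          have h2 : 2*(k+1)+1 = 2*k+3 := by omega
          have h3 : 2*(k+1) = 2*k+2 := by omega
          rw [h2, h3, gpoly_odd T α k]
          ring
        rw [h1]
        have h4 : 2*(k+1) = 2*k+2 := by omega
        rw [h4]
        ring
      rw [Finset.sum_congr rfl (fun k _ => expand k), Finset.sum_add_distrib]
      rw [Finset.sum_congr rfl (fun k (_ : k ∈ range (m+2)) => sq k)]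
      have e5 : ∑ k ∈ range (m+2), -(q (k+1)) = -(∑ k ∈ range (m+2), q (k+1)) := by
        rw [Finset.sum_neg_distrib]
      have e6 : ∑ k ∈ range (m+2), q (k+1) = (∑ k ∈ range (m+3), q k) - q 0 := by
        rw [Finset.sum_range_succ' q (m+2)]
        ring
      have e7 : q 0 = 0 := by
        rw [hq]; simp [gpoly]
      have e8 : ∑ k ∈ range (m+3), q k = ∑ k ∈ range (m+2), q k := by
        rw [Finset.sum_range_succ]
        have : q (m+2) = 0 := by
          rw [hq]; simp only
          rw [cN_eq_zero_of_lt T (2*(m+1)) (2*(m+2)) (by omega)]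
          ring
        rw [this, add_zero]
      rw [e5, e6, e7, e8, sub_zero, ← hU]
      rw [show m+1+1 = m+2 from by omega, ← sub_eq_add_neg, ← Finset.sum_sub_distrib]
      apply Finset.sum_congr rfl
      intro k _
      rw [hq]; simp only
      ring

noncomputable def Am (n : ℕ) : Matrix (Fin n) (Fin (n+1)) ℝ :=
  Matrix.of fun i k => α * cN T (2*(i:ℕ)) (2*(k:ℕ)) + cN T (2*(i:ℕ)+2) (2*(k:ℕ))

noncomputable def Lm (n : ℕ) : Matrix (Fin n) (Fin n) ℝ :=
  Matrix.of fun i k => α * cN T (2*(i:ℕ)) (2*(k:ℕ)) + cN T (2*(i:ℕ)+2) (2*(k:ℕ))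

noncomputable def Dm (n : ℕ) : Matrix (Fin n) (Fin n) ℝ :=
  Matrix.diagonal (fun k => w T (2*(k:ℕ)))

/-- the kernel vector entries -/
noncomputable def xv : ℕ → ℝ := fun k => (-1:ℝ)^k * gpoly T α (2*k)

lemma Am_last (n : ℕ) (i : Fin n) :
    Am T α n i (Fin.last n) = if (i:ℕ) = n - 1 then 1 else 0 := by
  have hlast : ((Fin.last n : Fin (n+1)) : ℕ) = n := rfl
  show α * cN T (2*(i:ℕ)) (2*n) + cN T (2*(i:ℕ)+2) (2*n) = _
  have hi := i.isLt
  rw [cN_eq_zero_of_lt T (2*(i:ℕ)) (2*n) (by omega)]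
  by_cases h : (i:ℕ) = n - 1
  · rw [if_pos h]
    have : 2*(i:ℕ)+2 = 2*n := by omega
    rw [this, cN_diag]
    ring
  · rw [if_neg h]
    rw [cN_eq_zero_of_lt T (2*(i:ℕ)+2) (2*n) (by omega)]
    ring

lemma Am_ker (n : ℕ) (i : Fin n) :
    ∑ k : Fin (n+1), Am T α n i k * xv T α (k:ℕ) = 0 := by
  have hi := i.isLt
  have hrange : ∑ k : Fin (n+1), Am T α n i k * xv T α (k:ℕ)
      = ∑ k ∈ range (n+1),
          (α * cN T (2*(i:ℕ)) (2*k) + cN T (2*(i:ℕ)+2) (2*k)) * xv T α k :=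
    Fin.sum_univ_eq_sum_range
      (fun k => (α * cN T (2*(i:ℕ)) (2*k) + cN T (2*(i:ℕ)+2) (2*k)) * xv T α k) (n+1)
  rw [hrange]
  have h1 : ∑ k ∈ range (n+1), (-1:ℝ)^k * gpoly T α (2*k) * cN T (2*(i:ℕ)) (2*k)
      = (-α)^(i:ℕ) := by
    rw [← Finset.sum_subset (Finset.range_subset_range.mpr (show (i:ℕ)+1 ≤ n+1 by omega))
      (fun x _ hx => by
        rw [cN_eq_zero_of_lt T (2*(i:ℕ)) (2*x) (by simp at hx; omega)]
        ring)]
    exact (Uker T α (i:ℕ)).1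
  have h2 : ∑ k ∈ range (n+1), (-1:ℝ)^k * gpoly T α (2*k) * cN T (2*(i:ℕ)+2) (2*k)
      = (-α)^((i:ℕ)+1) := by
    rw [← Finset.sum_subset (Finset.range_subset_range.mpr (show (i:ℕ)+2 ≤ n+1 by omega))
      (fun x _ hx => by
        rw [cN_eq_zero_of_lt T (2*(i:ℕ)+2) (2*x) (by simp at hx; omega)]
        ring)]
    have := (Uker T α ((i:ℕ)+1)).1
    rw [show 2*((i:ℕ)+1) = 2*(i:ℕ)+2 from by omega] at this
    exact this
  have expand : ∀ k ∈ range (n+1),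
      (α * cN T (2*(i:ℕ)) (2*k) + cN T (2*(i:ℕ)+2) (2*k)) * xv T α k
        = α * ((-1:ℝ)^k * gpoly T α (2*k) * cN T (2*(i:ℕ)) (2*k))
          + (-1:ℝ)^k * gpoly T α (2*k) * cN T (2*(i:ℕ)+2) (2*k) := by
    intro k _
    rw [xv]
    ring
  rw [Finset.sum_congr rfl expand, Finset.sum_add_distrib, ← Finset.mul_sum, h1, h2]
  ring

lemma detLm : ∀ n : ℕ, (Lm T α n).det = gpoly T α (2*n) := by
  intro n
  cases n with
  | zero => simp [Matrix.det_fin_zero, gpoly]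
  | succ n =>
    set L := Lm T α (n+1) with hL
    set P : Matrix (Fin (n+1)) (Fin (n+1)) ℝ :=
      Matrix.of fun i k => if i = 0 then xv T α (k:ℕ) else (if i = k then 1 else 0) with hP
    have hdetP : P.det = 1 := by
      rw [Matrix.det_of_upperTriangular (by
        intro i j hij
        show (if i = 0 then xv T α (j:ℕ) else (if i = j then 1 else 0)) = 0
        rw [if_neg (by intro h; rw [h] at hij; exact absurd hij (by simp)),
          if_neg (by intro h; rw [h] at hij; exact lt_irrefl _ hij)])]
      rw [Finset.prod_eq_one]
      intro i _
      show (if i = 0 then xv T α (i:ℕ) else (if i = i then 1 else 0)) = 1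
      by_cases h : i = (0 : Fin (n+1))
      · rw [if_pos h, h]
        show (-1:ℝ)^((0:Fin (n+1)):ℕ) * gpoly T α (2*((0:Fin (n+1)):ℕ)) = 1
        norm_num [gpoly]
      · rw [if_neg h, if_pos rfl]
    set C := P * Lᵀ with hC
    have hdetC : C.det = L.det := by
      rw [hC, Matrix.det_mul, hdetP, Matrix.det_transpose, one_mul]
    -- row 0 of C
    have hC0 : ∀ j, C 0 j = -(xv T α (n+1)) * (Pi.single (Fin.last n) (1:ℝ) : Fin (n+1) → ℝ) j := by
      intro j
      have hker := Am_ker T α (n+1) j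
      rw [Fin.sum_univ_castSucc] at hker
      have hAmL : ∀ k : Fin (n+1), Am T α (n+1) j k.castSucc = L j k := by
        intro k
        show α * cN T (2*(j:ℕ)) (2*((k.castSucc : Fin (n+2)):ℕ)) + _ = _
        rw [Fin.coe_castSucc]
        rfl
      have hlastval : ((Fin.last (n+1) : Fin (n+2)) : ℕ) = n+1 := rfl
      have hAlast : Am T α (n+1) j (Fin.last (n+1)) = if (j:ℕ) = n then 1 else 0 := by
        rw [Am_last]
        norm_num
      have hCsum : C 0 j = ∑ k : Fin (n+1), xv T α (k:ℕ) * L j k := by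
        rw [hC, Matrix.mul_apply]
        apply Finset.sum_congr rfl
        intro k _
        have hp : P 0 k = xv T α (k:ℕ) := by
          show (if (0:Fin (n+1)) = 0 then xv T α (k:ℕ) else if (0:Fin (n+1)) = k then 1 else 0)
            = xv T α (k:ℕ)
          rw [if_pos rfl]
        rw [hp, Matrix.transpose_apply]
      rw [hCsum]
      have : ∑ k : Fin (n+1), xv T α (k:ℕ) * L j k
          = ∑ k : Fin (n+1), Am T α (n+1) j k.castSucc * xv T α ((k.castSucc : Fin (n+2)):ℕ) := by
        apply Finset.sum_congr rfl
        intro k _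
        rw [hAmL, Fin.coe_castSucc]
        ring
      rw [this]
      have heq : ∑ k : Fin (n+1), Am T α (n+1) j k.castSucc * xv T α ((k.castSucc : Fin (n+2)):ℕ)
          = -(Am T α (n+1) j (Fin.last (n+1)) * xv T α ((Fin.last (n+1) : Fin (n+2)):ℕ)) := by
        linarith [hker]
      rw [heq, hAlast, hlastval]
      by_cases h : j = Fin.last n
      · rw [if_pos (by rw [h]; rfl), Pi.single_apply, if_pos h]
        ring
      · rw [if_neg (by intro hc; apply h; exact Fin.ext hc), Pi.single_apply, if_neg h]
        ring
    have hCi : ∀ (i : Fin (n+1)) (j : Fin (n+1)), i ≠ 0 → C i j = L j i := by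
      intro i j hi
      rw [hC, Matrix.mul_apply]
      rw [Finset.sum_eq_single i]
      · show (if i = 0 then _ else (if i = i then (1:ℝ) else 0)) * _ = _
        rw [if_neg hi, if_pos rfl, one_mul]
        rfl
      · intro b _ hb
        show (if i = 0 then _ else (if i = b then (1:ℝ) else 0)) * _ = 0
        rw [if_neg hi, if_neg (fun h => hb h.symm)]
        ring
      · intro h; exact absurd (Finset.mem_univ i) h
    -- pull out the scalar from row 0
    have hCeq : C = Matrix.updateRow C 0 ((-(xv T α (n+1))) • (Pi.single (Fin.last n) (1:ℝ) : Fin (n+1) → ℝ)) := by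
      ext i j
      by_cases h : i = 0
      · subst h
        rw [Matrix.updateRow_self]
        rw [Pi.smul_apply, smul_eq_mul]
        exact hC0 j
      · rw [Matrix.updateRow_ne h]
    have hdetC2 : C.det = -(xv T α (n+1)) *
        (Matrix.updateRow C 0 (Pi.single (Fin.last n) (1:ℝ))).det := by
      conv_lhs => rw [hCeq]
      rw [Matrix.det_updateRow_smul]
    -- the rotated matrix is upper triangular with unit diagonal
    set C1 := Matrix.updateRow C 0 (Pi.single (Fin.last n) (1:ℝ)) with hC1
    have hdetC1 : C1.det = (-1:ℝ)^n := by
      have hrot := Matrix.det_permute (finRotate (n+1)) C1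
      have hR : (C1.submatrix (finRotate (n+1)) id).det = 1 := by
        rw [Matrix.det_of_upperTriangular (by
          intro i j hij
          show C1 (finRotate (n+1) i) j = 0
          by_cases h : i = Fin.last n
          · subst h
            rw [finRotate_last]
            rw [hC1, Matrix.updateRow_self, Pi.single_apply,
              if_neg (by intro hc; rw [hc] at hij; exact lt_irrefl _ hij)]
          · have hval : (i:ℕ) < n :=
              lt_of_le_of_ne (Nat.lt_succ_iff.mp i.isLt)
                (fun hc => h (Fin.ext (by rw [hc]; rfl)))
            have hlt : i < Fin.last n := by
              rw [Fin.lt_def, Fin.val_last]; exact hval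
            have hfr : finRotate (n+1) i = i + 1 := finRotate_succ_apply i
            have hval1 : ((i+1 : Fin (n+1)):ℕ) = (i:ℕ)+1 := Fin.val_add_one_of_lt hlt
            have hne : i + 1 ≠ (0 : Fin (n+1)) := by
              intro hc
              have h0 : ((i+1 : Fin (n+1)):ℕ) = 0 := by rw [hc]; rfl
              omega
            rw [hfr, hC1, Matrix.updateRow_ne hne, hCi _ _ hne]
            show α * cN T (2*(j:ℕ)) (2*((i+1 : Fin (n+1)):ℕ))
              + cN T (2*(j:ℕ)+2) (2*((i+1 : Fin (n+1)):ℕ)) = 0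
            rw [hval1]
            have hji : (j:ℕ) < (i:ℕ) := hij
            rw [cN_eq_zero_of_lt T (2*(j:ℕ)) (2*((i:ℕ)+1)) (by omega),
              cN_eq_zero_of_lt T (2*(j:ℕ)+2) (2*((i:ℕ)+1)) (by omega)]
            ring)]
        rw [Finset.prod_eq_one]
        intro i _
        show C1 (finRotate (n+1) i) i = 1
        by_cases h : i = Fin.last n
        · subst h
          rw [finRotate_last, hC1, Matrix.updateRow_self, Pi.single_apply, if_pos rfl]
        · have hval : (i:ℕ) < n :=
            lt_of_le_of_ne (Nat.lt_succ_iff.mp i.isLt)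
              (fun hc => h (Fin.ext (by rw [hc]; rfl)))
          have hlt : i < Fin.last n := by
            rw [Fin.lt_def, Fin.val_last]; exact hval
          have hfr : finRotate (n+1) i = i + 1 := finRotate_succ_apply i
          have hval1 : ((i+1 : Fin (n+1)):ℕ) = (i:ℕ)+1 := Fin.val_add_one_of_lt hlt
          have hne : i + 1 ≠ (0 : Fin (n+1)) := by
            intro hc
            have h0 : ((i+1 : Fin (n+1)):ℕ) = 0 := by rw [hc]; rfl
            omega
          rw [hfr, hC1, Matrix.updateRow_ne hne, hCi _ _ hne]
          show α * cN T (2*(i:ℕ)) (2*((i+1 : Fin (n+1)):ℕ))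
            + cN T (2*(i:ℕ)+2) (2*((i+1 : Fin (n+1)):ℕ)) = 1
          rw [hval1]
          rw [cN_eq_zero_of_lt T (2*(i:ℕ)) (2*((i:ℕ)+1)) (by omega)]
          rw [show 2*(i:ℕ)+2 = 2*((i:ℕ)+1) from by omega, cN_diag]
          ring
      rw [hR, sign_finRotate] at hrot
      have h2 : ((((-1:ℤˣ)^n :ℤˣ):ℤ):ℝ) = (-1:ℝ)^n := by push_cast; norm_num
      rw [Nat.add_sub_cancel, h2] at hrot
      have hsq : (-1:ℝ)^n * (-1:ℝ)^n = 1 := by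
        rw [← pow_add, show n+n = 2*n from by omega, pow_mul]
        norm_num
      calc C1.det = ((-1:ℝ)^n * (-1:ℝ)^n) * C1.det := by rw [hsq, one_mul]
        _ = (-1:ℝ)^n * ((-1:ℝ)^n * C1.det) := by ring
        _ = (-1:ℝ)^n := by rw [← hrot, mul_one]
    rw [← hdetC, hdetC2, hdetC1, xv]
    have hkey : (-1:ℝ)^(n+1) * (-1:ℝ)^n = -1 := by
      rw [← pow_add, show n+1+n = 2*n+1 from by omega, pow_succ, pow_mul]
      norm_num
    show -((-1:ℝ)^(n+1) * gpoly T α (2*(n+1))) * (-1:ℝ)^n = gpoly T α (2*(n+1))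
    linear_combination (-(gpoly T α (2*(n+1)))) * hkey

lemma Am_entry_sum (n : ℕ) (β : ℝ) (i j : Fin n) :
    (Am T α n * Dm T (n+1) * (Am T β n)ᵀ) i j
      = ∑ k ∈ range (n+1),
          (α * cN T (2*(i:ℕ)) (2*k) + cN T (2*(i:ℕ)+2) (2*k))
            * (w T (2*k) * (β * cN T (2*(j:ℕ)) (2*k) + cN T (2*(j:ℕ)+2) (2*k))) := by
  rw [Matrix.mul_apply]
  rw [← Fin.sum_univ_eq_sum_range (fun k =>
    (α * cN T (2*(i:ℕ)) (2*k) + cN T (2*(i:ℕ)+2) (2*k))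
      * (w T (2*k) * (β * cN T (2*(j:ℕ)) (2*k) + cN T (2*(j:ℕ)+2) (2*k)))) (n+1)]
  apply Finset.sum_congr rfl
  intro k _
  simp only [Dm]
  rw [Matrix.mul_diagonal, Matrix.transpose_apply]
  show ((α * cN T (2*(i:ℕ)) (2*(k:ℕ)) + cN T (2*(i:ℕ)+2) (2*(k:ℕ))) * w T (2*(k:ℕ)))
      * (β * cN T (2*(j:ℕ)) (2*(k:ℕ)) + cN T (2*(j:ℕ)+2) (2*(k:ℕ))) = _
  ring

lemma keyF (β : ℝ) : ∀ n : ℕ,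
    (Am T α n * Dm T (n+1) * (Am T β n)ᵀ).det
      = ∑ j ∈ range (n+1), (∏ ℓ ∈ Finset.Ico (2*j) (2*n), T ℓ)
          * gpoly T α (2*j) * gpoly T β (2*j) * ∏ k ∈ range n, w T (2*k) := by
  intro n
  induction n with
  | zero =>
    rw [Matrix.det_fin_zero]
    simp [gpoly]
  | succ n ih =>
    set G := Am T α (n+1) * Dm T (n+1+1) * (Am T β (n+1))ᵀ with hG
    set G0 := Lm T α (n+1) * Dm T (n+1) * (Lm T β (n+1))ᵀ with hG0
    have hG0entry : ∀ i j : Fin (n+1), G0 i j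
        = ∑ k ∈ range (n+1),
            (α * cN T (2*(i:ℕ)) (2*k) + cN T (2*(i:ℕ)+2) (2*k))
              * (w T (2*k) * (β * cN T (2*(j:ℕ)) (2*k) + cN T (2*(j:ℕ)+2) (2*k))) := by
      intro i j
      rw [hG0, Matrix.mul_apply]
      rw [← Fin.sum_univ_eq_sum_range (fun k =>
        (α * cN T (2*(i:ℕ)) (2*k) + cN T (2*(i:ℕ)+2) (2*k))
          * (w T (2*k) * (β * cN T (2*(j:ℕ)) (2*k) + cN T (2*(j:ℕ)+2) (2*k)))) (n+1)]
      apply Finset.sum_congr rfl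
      intro k _
      simp only [Dm]
      rw [Matrix.mul_diagonal, Matrix.transpose_apply]
      show ((α * cN T (2*(i:ℕ)) (2*(k:ℕ)) + cN T (2*(i:ℕ)+2) (2*(k:ℕ))) * w T (2*(k:ℕ)))
          * (β * cN T (2*(j:ℕ)) (2*(k:ℕ)) + cN T (2*(j:ℕ)+2) (2*(k:ℕ))) = _
      ring
    have hGentry : ∀ i j : Fin (n+1), G i j
        = G0 i j + w T (2*(n+1))
            * ((if (i:ℕ) = n then 1 else 0) * (if (j:ℕ) = n then 1 else 0)) := by
      intro i j
      rw [hG, Am_entry_sum, hG0entry]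
      rw [Finset.sum_range_succ]
      have hlast : ∀ (γ : ℝ) (l : Fin (n+1)),
          γ * cN T (2*(l:ℕ)) (2*(n+1)) + cN T (2*(l:ℕ)+2) (2*(n+1))
            = (if (l:ℕ) = n then 1 else 0) := by
        intro γ l
        have hl := l.isLt
        rw [cN_eq_zero_of_lt T (2*(l:ℕ)) (2*(n+1)) (by omega)]
        by_cases h : (l:ℕ) = n
        · rw [if_pos h, show 2*(l:ℕ)+2 = 2*(n+1) from by omega, cN_diag]
          ring
        · rw [if_neg h, cN_eq_zero_of_lt T (2*(l:ℕ)+2) (2*(n+1)) (by omega)]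
          ring
      rw [hlast α i, hlast β j]
      ring
    have hGupd : G = Matrix.updateRow G0 (Fin.last n)
        (G0 (Fin.last n) + w T (2*(n+1)) • (Pi.single (Fin.last n) (1:ℝ) : Fin (n+1) → ℝ)) := by
      ext i j
      by_cases h : i = Fin.last n
      · subst h
        rw [Matrix.updateRow_self]
        rw [hGentry]
        have : ((Fin.last n : Fin (n+1)):ℕ) = n := rfl
        rw [this, if_pos rfl]
        rw [Pi.add_apply, Pi.smul_apply, smul_eq_mul, Pi.single_apply]
        by_cases hj : j = Fin.last n
        · rw [if_pos hj, if_pos (show (j:ℕ) = n from by rw [hj]; rfl)]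
          ring
        · rw [if_neg hj,
            if_neg (show ¬ (j:ℕ) = n from fun hc => hj (Fin.ext (by rw [hc]; rfl)))]
          ring
      · rw [Matrix.updateRow_ne h, hGentry]
        rw [if_neg (show ¬ (i:ℕ) = n from fun hc => h (Fin.ext (by rw [hc]; rfl)))]
        ring
    have hdetG : G.det = G0.det + w T (2*(n+1))
        * (Matrix.updateRow G0 (Fin.last n) (Pi.single (Fin.last n) (1:ℝ))).det := by
      rw [hGupd, Matrix.det_updateRow_add, Matrix.det_updateRow_smul,
        Matrix.updateRow_eq_self]
    have hdetG0 : G0.det = gpoly T α (2*(n+1)) * gpoly T β (2*(n+1))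
        * ∏ k ∈ range (n+1), w T (2*k) := by
      rw [hG0, Matrix.det_mul, Matrix.det_mul, Matrix.det_transpose, detLm, detLm]
      rw [show Dm T (n+1) = Matrix.diagonal (fun k : Fin (n+1) => w T (2*(k:ℕ))) from rfl,
        Matrix.det_diagonal]
      rw [← Fin.prod_univ_eq_prod_range (fun k => w T (2*k)) (n+1)]
      ring
    -- the minor
    have hminor : (Matrix.updateRow G0 (Fin.last n) (Pi.single (Fin.last n) (1:ℝ))).det
        = (Am T α n * Dm T (n+1) * (Am T β n)ᵀ).det := by
      rw [Matrix.det_succ_row _ (Fin.last n)]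
      rw [Finset.sum_eq_single (Fin.last n)]
      · rw [Matrix.updateRow_self, Pi.single_apply, if_pos rfl]
        have hsign : ((Fin.last n : Fin (n+1)):ℕ) = n := rfl
        rw [hsign]
        have hpow : (-1:ℝ)^(n+n) = 1 := by
          rw [show n+n = 2*n from by omega, pow_mul]
          norm_num
        rw [hpow]
        have hsub : (Matrix.updateRow G0 (Fin.last n)
            (Pi.single (Fin.last n) (1:ℝ))).submatrix (Fin.last n).succAbove
              (Fin.last n).succAbove
            = Am T α n * Dm T (n+1) * (Am T β n)ᵀ := by
          ext i j
          rw [Matrix.submatrix_apply]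
          simp only [Fin.succAbove_last]
          rw [Matrix.updateRow_ne (Fin.castSucc_lt_last i).ne]
          rw [hG0entry, Am_entry_sum]
          have hci : ((Fin.castSucc i : Fin (n+1)):ℕ) = (i:ℕ) := rfl
          have hcj : ((Fin.castSucc j : Fin (n+1)):ℕ) = (j:ℕ) := rfl
          rw [hci, hcj]
        rw [hsub]
        ring
      · intro b _ hb
        rw [Matrix.updateRow_self, Pi.single_apply, if_neg hb]
        ring
      · intro h; exact absurd (Finset.mem_univ _) h
    rw [hdetG, hdetG0, hminor, ih]
    -- final algebra
    rw [Finset.sum_range_succ (fun j => (∏ ℓ ∈ Finset.Ico (2*j) (2*(n+1)), T ℓ)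
        * gpoly T α (2*j) * gpoly T β (2*j) * ∏ k ∈ range (n+1), w T (2*k)) (n+1)]
    rw [Finset.Ico_self, Finset.prod_empty]
    rw [Finset.mul_sum]
    have hterm : ∀ j ∈ range (n+1),
        w T (2*(n+1)) * ((∏ ℓ ∈ Finset.Ico (2*j) (2*n), T ℓ)
            * gpoly T α (2*j) * gpoly T β (2*j) * ∏ k ∈ range n, w T (2*k))
          = (∏ ℓ ∈ Finset.Ico (2*j) (2*(n+1)), T ℓ)
            * gpoly T α (2*j) * gpoly T β (2*j) * ∏ k ∈ range (n+1), w T (2*k) := by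
      intro j hj
      have hjn : j ≤ n := by simp at hj; omega
      have hIco : ∏ ℓ ∈ Finset.Ico (2*j) (2*(n+1)), T ℓ
          = (∏ ℓ ∈ Finset.Ico (2*j) (2*n), T ℓ) * T (2*n) * T (2*n+1) := by
        rw [show 2*(n+1) = (2*n+1)+1 from by omega,
          Finset.prod_Ico_succ_top (by omega),
          Finset.prod_Ico_succ_top (by omega)]
      have hw2 : w T (2*(n+1)) = w T (2*n) * T (2*n) * T (2*n+1) := by
        rw [show 2*(n+1) = (2*n+1)+1 from by omega, w_succ, w_succ]
      rw [hIco, hw2, Finset.prod_range_succ]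
      ring
    rw [Finset.sum_congr rfl hterm]
    ring

theorem hankel_main (T : ℕ → ℝ)
    (n : ℕ) (α β : ℝ) :
    Matrix.det (Matrix.of fun i j : Fin n =>
        α * β * dyckGF T (2 * ((i : ℕ) + (j : ℕ))) 0
          + (α + β) * dyckGF T (2 * ((i : ℕ) + (j : ℕ) + 1)) 0
          + dyckGF T (2 * ((i : ℕ) + (j : ℕ) + 2)) 0)
      = (∑ j ∈ Finset.range (n + 1),
            (∏ ℓ ∈ Finset.Ico (2 * j) (2 * n), T ℓ) * gpoly T α (2 * j) * gpoly T β (2 * j))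
        * Matrix.det (Matrix.of fun i j : Fin n =>
            dyckGF T (2 * ((i : ℕ) + (j : ℕ))) 0) := by
  have h0 : ∀ m : ℕ, dyckGF T m 0 = HK.cN T m 0 := fun m => by
    show dyckGF T m 0 = dyckGF T m ((0:ℕ):ℤ)
    norm_num
  -- the LHS matrix
  have hM : (Matrix.of fun i j : Fin n =>
        α * β * dyckGF T (2 * ((i : ℕ) + (j : ℕ))) 0
          + (α + β) * dyckGF T (2 * ((i : ℕ) + (j : ℕ) + 1)) 0
          + dyckGF T (2 * ((i : ℕ) + (j : ℕ) + 2)) 0)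
      = HK.Am T α n * HK.Dm T (n+1) * (HK.Am T β n)ᵀ := by
    ext i j
    rw [Matrix.of_apply, HK.Am_entry_sum]
    have expand : ∀ k ∈ Finset.range (n+1),
        (α * cN T (2*(i:ℕ)) (2*k) + cN T (2*(i:ℕ)+2) (2*k))
            * (w T (2*k) * (β * cN T (2*(j:ℕ)) (2*k) + cN T (2*(j:ℕ)+2) (2*k)))
          = α * β * (cN T (2*(i:ℕ)) (2*k) * (w T (2*k) * cN T (2*(j:ℕ)) (2*k)))
            + α * (cN T (2*(i:ℕ)) (2*k) * (w T (2*k) * cN T (2*((j:ℕ)+1)) (2*k)))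
            + β * (cN T (2*((i:ℕ)+1)) (2*k) * (w T (2*k) * cN T (2*(j:ℕ)) (2*k)))
            + cN T (2*((i:ℕ)+1)) (2*k) * (w T (2*k) * cN T (2*((j:ℕ)+1)) (2*k)) := by
      intro k _
      rw [show 2*((i:ℕ)+1) = 2*(i:ℕ)+2 from by omega,
        show 2*((j:ℕ)+1) = 2*(j:ℕ)+2 from by omega]
      ring
    rw [Finset.sum_congr rfl expand]
    rw [Finset.sum_add_distrib, Finset.sum_add_distrib, Finset.sum_add_distrib,
      ← Finset.mul_sum, ← Finset.mul_sum, ← Finset.mul_sum]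
    rw [← HK.split_even T (i:ℕ) (j:ℕ) (n+1) (by omega),
      ← HK.split_even T (i:ℕ) ((j:ℕ)+1) (n+1) (by omega),
      ← HK.split_even T ((i:ℕ)+1) (j:ℕ) (n+1) (by omega),
      ← HK.split_even T ((i:ℕ)+1) ((j:ℕ)+1) (n+1) (by omega)]
    rw [h0, h0, h0]
    rw [show 2*((i:ℕ)+(j:ℕ)) = 2*(i:ℕ)+2*(j:ℕ) from by omega]
    rw [show 2*((i:ℕ)+(j:ℕ)+1) = 2*(i:ℕ)+2*((j:ℕ)+1) from by omega]
    rw [show 2*((i:ℕ)+(j:ℕ)+2) = 2*((i:ℕ)+1)+2*((j:ℕ)+1) from by omega]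
    rw [show 2*((i:ℕ)+1)+2*(j:ℕ) = 2*(i:ℕ)+2*((j:ℕ)+1) from by omega]
    ring
  -- the Hankel matrix factorization
  set L0 : Matrix (Fin n) (Fin n) ℝ :=
    Matrix.of (fun i k : Fin n => cN T (2*(i:ℕ)) (2*(k:ℕ))) with hL0
  have hH : (Matrix.of fun i j : Fin n => dyckGF T (2 * ((i : ℕ) + (j : ℕ))) 0)
      = L0 * HK.Dm T n * L0ᵀ := by
    ext i j
    rw [Matrix.of_apply, Matrix.mul_apply]
    rw [h0, show 2*((i:ℕ)+(j:ℕ)) = 2*(i:ℕ)+2*(j:ℕ) from by omega]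
    rw [HK.split_even T (i:ℕ) (j:ℕ) n i.isLt]
    rw [← Fin.sum_univ_eq_sum_range
      (fun k => cN T (2*(i:ℕ)) (2*k) * (w T (2*k) * cN T (2*(j:ℕ)) (2*k))) n]
    apply Finset.sum_congr rfl
    intro k _
    simp only [HK.Dm]
    rw [Matrix.mul_diagonal, Matrix.transpose_apply]
    show cN T (2*(i:ℕ)) (2*(k:ℕ)) * (w T (2*(k:ℕ)) * cN T (2*(j:ℕ)) (2*(k:ℕ)))
      = cN T (2*(i:ℕ)) (2*(k:ℕ)) * w T (2*(k:ℕ)) * cN T (2*(j:ℕ)) (2*(k:ℕ))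
    ring
  have hdetL0 : L0.det = 1 := by
    rw [Matrix.det_of_lowerTriangular L0 (by
      intro i j hij
      have hij' : (i:ℕ) < (j:ℕ) := hij
      show cN T (2*(i:ℕ)) (2*(j:ℕ)) = 0
      exact cN_eq_zero_of_lt T _ _ (by omega))]
    rw [Finset.prod_eq_one]
    intro i _
    show cN T (2*(i:ℕ)) (2*(i:ℕ)) = 1
    exact cN_diag T _
  have hdetH : (Matrix.of fun i j : Fin n => dyckGF T (2 * ((i : ℕ) + (j : ℕ))) 0).det
      = ∏ k ∈ Finset.range n, w T (2*k) := by
    rw [hH, Matrix.det_mul, Matrix.det_mul, Matrix.det_transpose, hdetL0]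
    simp only [HK.Dm]
    rw [Matrix.det_diagonal]
    rw [← Fin.prod_univ_eq_prod_range (fun k => w T (2*k)) n]
    ring
  rw [hM, HK.keyF T α β n, hdetH, Finset.sum_mul]

end HK

/-- Corollary 2, Eq. (2.9): for `n ≥ 1` and real `α, β`,
`det(αβ c_{i+j} + (α+β) c_{i+j+1} + c_{i+j+2})_{i,j=0}^{n-1}
  = (∑_{j=0}^{n} (∏_{ℓ=2j}^{2n-1} T_ℓ) g_{2j}(α) g_{2j}(β)) · det(c_{i+j})_{i,j=0}^{n-1}`,
where `c_n = c(2n, 0)`. -/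
theorem hankel_three_term_dyck_even (T : ℕ → ℝ) (hT : ∀ n, T n ≠ 0)
    (n : ℕ) (hn : 0 < n) (α β : ℝ) :
    Matrix.det (Matrix.of fun i j : Fin n =>
        α * β * dyckGF T (2 * ((i : ℕ) + (j : ℕ))) 0
          + (α + β) * dyckGF T (2 * ((i : ℕ) + (j : ℕ) + 1)) 0
          + dyckGF T (2 * ((i : ℕ) + (j : ℕ) + 2)) 0)
      = (∑ j ∈ Finset.range (n + 1),
            (∏ ℓ ∈ Finset.Ico (2 * j) (2 * n), T ℓ) * gpoly T α (2 * j) * gpoly T β (2 * j))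
        * Matrix.det (Matrix.of fun i j : Fin n =>
            dyckGF T (2 * ((i : ℕ) + (j : ℕ))) 0) :=
  HK.hankel_main T n α β
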